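/- If f : ℝⁿ → ℝ is differentiable with L-Lipschitz gradient and is bounded below, then the gradient descent iterates x_{k+1} = x_k − (1/L)∇f(x_k) satisfy ∇f(x_k) → 0 as k → ∞. -/

import Mathlib

open Filter

lemma descent_lemma (n : ℕ) (f : EuclideanSpace ℝ (Fin n) → ℝ) (L : ℝ) (hL : 0 < L)
    (hdiff : Differentiable ℝ f)
    (hlip : ∀ x y : EuclideanSpace ℝ (Fin n),
      ‖gradient f x - gradient f y‖ ≤ L * ‖x - y‖)
    (x v : EuclideanSpace ℝ (Fin n)) :
    f (x + v) ≤ f x + inner ℝ (gradient f x) v + L / 2 * ‖v‖ ^ 2 := by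
  have hgradcont : Continuous (fun p => gradient f p) := by
    apply LipschitzWith.continuous (K := L.toNNReal)
    apply LipschitzWith.of_dist_le_mul
    intro a b
    rw [dist_eq_norm, dist_eq_norm]
    simpa [Real.coe_toNNReal _ hL.le] using hlip a b
  have hderiv : ∀ t : ℝ, HasDerivAt (fun t : ℝ => f (x + t • v))
      (inner ℝ (gradient f (x + t • v)) v : ℝ) t := by
    intro t
    have hc : HasDerivAt (fun t : ℝ => x + t • v) v t := by
      simpa using ((hasDerivAt_id t).smul_const v).const_add x
    have hf := ((hdiff (x + t • v)).hasGradientAt).hasFDerivAt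
    have h := hf.comp_hasDerivAt t hc
    simp at h ⊢
    exact h
  have hcont : Continuous (fun t : ℝ => (inner ℝ (gradient f (x + t • v)) v : ℝ)) := by
    exact (hgradcont.comp (by continuity)).inner continuous_const
  have hint : ∫ t in (0:ℝ)..1, (inner ℝ (gradient f (x + t • v)) v : ℝ)
      = f (x + v) - f x := by
    have := intervalIntegral.integral_eq_sub_of_hasDerivAt
      (fun t _ => hderiv t) (hcont.intervalIntegrable 0 1)
    simpa using this
  have hbound : ∀ t ∈ Set.Icc (0:ℝ) 1,
      (inner ℝ (gradient f (x + t • v)) v : ℝ)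
        ≤ inner ℝ (gradient f x) v + L * ‖v‖ ^ 2 * t := by
    intro t ht
    have h1 : (inner ℝ (gradient f (x + t • v)) v : ℝ) - inner ℝ (gradient f x) v
        = inner ℝ (gradient f (x + t • v) - gradient f x) v := by
      rw [inner_sub_left]
    have h2 : (inner ℝ (gradient f (x + t • v) - gradient f x) v : ℝ)
        ≤ ‖gradient f (x + t • v) - gradient f x‖ * ‖v‖ :=
      real_inner_le_norm _ _
    have h3 : ‖gradient f (x + t • v) - gradient f x‖ ≤ L * (t * ‖v‖) := by
      have := hlip (x + t • v) x
      simpa [norm_smul, abs_of_nonneg ht.1] using this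
    nlinarith [norm_nonneg v, mul_le_mul_of_nonneg_right h3 (norm_nonneg v)]
  have hmono := intervalIntegral.integral_mono_on (μ := MeasureTheory.volume) (by norm_num : (0:ℝ) ≤ 1)
    (hcont.intervalIntegrable 0 1)
    ((Continuous.intervalIntegrable (by fun_prop) 0 1 :
      IntervalIntegrable (fun t : ℝ => (inner ℝ (gradient f x) v : ℝ) + L * ‖v‖ ^ 2 * t)
        MeasureTheory.volume 0 1))
    hbound
  have hrhs : ∫ t in (0:ℝ)..1, (inner ℝ (gradient f x) v + L * ‖v‖ ^ 2 * t)
      = inner ℝ (gradient f x) v + L / 2 * ‖v‖ ^ 2 := by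
    rw [intervalIntegral.integral_add (intervalIntegrable_const)
      ((Continuous.intervalIntegrable (by fun_prop) 0 1 :
        IntervalIntegrable (fun t : ℝ => L * ‖v‖ ^ 2 * t) MeasureTheory.volume 0 1))]
    rw [intervalIntegral.integral_const, intervalIntegral.integral_const_mul, integral_id]
    norm_num
    ring
  rw [hint, hrhs] at hmono
  linarith

/-- If `f` is differentiable with `L`-Lipschitz gradient and bounded below, then the
gradient descent iterates `x_{k+1} = x_k − (1/L) ∇f(x_k)` satisfy `∇f(x_k) → 0`. -/
theorem gradient_descent_grad_tendsto_zero (n : ℕ)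
    (f : EuclideanSpace ℝ (Fin n) → ℝ) (L : ℝ) (hL : 0 < L)
    (hdiff : Differentiable ℝ f)
    (hlip : ∀ x y : EuclideanSpace ℝ (Fin n),
      ‖gradient f x - gradient f y‖ ≤ L * ‖x - y‖)
    (hbdd : BddBelow (Set.range f))
    (x : ℕ → EuclideanSpace ℝ (Fin n))
    (hiter : ∀ k : ℕ, x (k + 1) = x k - (1 / L) • gradient f (x k)) :
    Tendsto (fun k : ℕ => gradient f (x k)) atTop (nhds 0) := by
  set g := fun k => gradient f (x k) with hg
  have hkey : ∀ k, f (x (k + 1)) ≤ f (x k) - 1 / (2 * L) * ‖g k‖ ^ 2 := by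
    intro k
    have h := descent_lemma n f L hL hdiff hlip (x k) (-((1 / L) • g k))
    have hx1 : x (k + 1) = x k + -((1 / L) • g k) := by
      rw [hiter k]; abel
    rw [← hx1] at h
    have hinner : (inner ℝ (g k) (-((1 / L) • g k)) : ℝ) = -(1 / L) * ‖g k‖ ^ 2 := by
      rw [inner_neg_right, real_inner_smul_right, real_inner_self_eq_norm_sq]
      ring
    have hnorm : ‖-((1 / L) • g k)‖ ^ 2 = (1 / L) ^ 2 * ‖g k‖ ^ 2 := by
      rw [norm_neg, norm_smul, Real.norm_eq_abs, abs_of_nonneg (by positivity : (0:ℝ) ≤ 1 / L)]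
      ring
    rw [hinner, hnorm] at h
    have : L / 2 * ((1 / L) ^ 2 * ‖g k‖ ^ 2) = 1 / (2 * L) * ‖g k‖ ^ 2 := by
      field_simp
    rw [this] at h
    have h2 : -(1 / L) * ‖g k‖ ^ 2 + 1 / (2 * L) * ‖g k‖ ^ 2
        = -(1 / (2 * L) * ‖g k‖ ^ 2) := by field_simp; ring
    linarith
  have hanti : Antitone (fun k => f (x k)) := by
    apply antitone_nat_of_succ_le
    intro k
    have hpos : 0 ≤ 1 / (2 * L) * ‖g k‖ ^ 2 := by positivity
    linarith [hkey k]
  obtain ⟨c, hc⟩ := hbdd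
  have hlb : ∀ k, c ≤ f (x k) := fun k => hc (Set.mem_range_self (x k))
  have hconv : ∃ l, Tendsto (fun k => f (x k)) atTop (nhds l) :=
    ⟨_, tendsto_atTop_ciInf hanti ⟨c, fun y ⟨k, hk⟩ => hk ▸ hlb k⟩⟩
  obtain ⟨l, hl⟩ := hconv
  have hdiffto : Tendsto (fun k => f (x k) - f (x (k + 1))) atTop (nhds 0) := by
    have h2 : Tendsto (fun k => f (x (k + 1))) atTop (nhds l) :=
      hl.comp (tendsto_add_atTop_nat 1)
    simpa using hl.sub h2
  have hsq : Tendsto (fun k => ‖g k‖ ^ 2) atTop (nhds 0) := by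
    apply squeeze_zero (fun k => sq_nonneg _) (fun k => ?_)
      (by simpa using hdiffto.const_mul (2 * L))
    have h1 : 1 / (2 * L) * ‖g k‖ ^ 2 ≤ f (x k) - f (x (k + 1)) := by linarith [hkey k]
    calc ‖g k‖ ^ 2 = 2 * L * (1 / (2 * L) * ‖g k‖ ^ 2) := by field_simp
      _ ≤ 2 * L * (f (x k) - f (x (k + 1))) := by
          exact mul_le_mul_of_nonneg_left h1 (by positivity)
  have hnorm : Tendsto (fun k => ‖g k‖) atTop (nhds 0) := by
    have := hsq.sqrt
    simpa [Real.sqrt_sq (norm_nonneg _)] using this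
  exact tendsto_zero_iff_norm_tendsto_zero.mpr hnorm
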